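/- Let X be a Banach space and (g_m) a sequence in X* \ {0} such that there exists C > 0 with ∑_{m=1}^∞ |g_m(x)| ≤ C‖x‖ for all x ∈ X. Then for every sequence of positive reals (a_n) with ∑_{n=1}^∞ a_n^{-1} = ∞, the zero functional is a weak-* cluster point of the sequence (a_n g_n) in X*. -/
import Mathlib


/-- If the partial sums `∑ |g_m(x)|` are uniformly dominated by `C‖x‖` and
`∑ aₙ⁻¹ = ∞`, then `0` is a weak-* cluster point of `(aₙ gₙ)`. -/
theorem stmt_1 {X : Type*} [NormedAddCommGroup X] [NormedSpace ℝ X]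
    (g : ℕ → X →L[ℝ] ℝ) (hg0 : ∀ m, g m ≠ 0)
    (C : ℝ) (hC : 0 < C)
    (hbound : ∀ x : X, ∀ n : ℕ, ∑ m ∈ Finset.range n, |g m x| ≤ C * ‖x‖)
    (a : ℕ → ℝ) (ha : ∀ n, 0 < a n)
    (hdiv : ¬ Summable (fun n => (a n)⁻¹)) :
    ∀ (s : Finset X) (ε : ℝ), 0 < ε → ∀ N : ℕ,
      ∃ m ≥ N, ∀ x ∈ s, |a m * g m x| < ε := by
  intro s ε hε N
  by_contra h
  push_neg at h
  have hsum : ∀ x : X, Summable (fun m => |g m x|) := fun x =>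
    summable_of_sum_range_le (fun n => abs_nonneg _) (fun n => hbound x n)
  have hF : Summable (fun m => ∑ x ∈ s, |g m x|) :=
    summable_sum (fun x _ => hsum x)
  apply hdiv
  rw [← summable_nat_add_iff N]
  refine Summable.of_nonneg_of_le (fun n => inv_nonneg.2 (ha _).le) (fun n => ?_)
    (((summable_nat_add_iff N).2 hF).mul_left ε⁻¹)
  obtain ⟨x, hx, hεx⟩ := h (n + N) (Nat.le_add_left _ _)
  rw [abs_mul, abs_of_pos (ha _)] at hεx
  have h2 : |g (n + N) x| ≤ ∑ y ∈ s, |g (n + N) y| :=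
    Finset.single_le_sum (f := fun y => |g (n + N) y|) (fun y _ => abs_nonneg _) hx
  calc (a (n + N))⁻¹ ≤ ε⁻¹ * |g (n + N) x| := by
        rw [← one_div, mul_comm, ← div_eq_mul_inv,
          div_le_div_iff₀ (ha _) hε, one_mul, mul_comm]
        exact hεx
    _ ≤ ε⁻¹ * ∑ y ∈ s, |g (n + N) y| :=
        mul_le_mul_of_nonneg_left h2 (inv_nonneg.2 hε.le)
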